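/- Under the parametrized Sinkhorn setup, let x̄(θ) ∈ ℝ^n be any fixed point of F(·, θ) (e.g. the limit of the Sinkhorn iterates), let A(θ) = (∂F/∂x)(x̄(θ), θ) ∈ ℝ^{n×n} and B(θ) = (∂F/∂θ)(x̄(θ), θ) ∈ ℝ^{n×p}. Then the matrix I − A(θ) + 1_n a(θ)^T is invertible, and the derivative of the unique entropic optimal transport plan P̂(θ) satisfies, for every direction h ∈ ℝ^p: (dP̂/dθ)(θ)[h] = (∂P/∂x)(x̄(θ), θ)[(I − A(θ) + 1_n a(θ)^T)^{-1} B(θ) h] + (∂P/∂θ)(x̄(θ), θ)[h], where (∂P/∂x)(x̄(θ), θ) : ℝ^n → ℝ^{n×m} and (∂P/∂θ)(x̄(θ), θ) : ℝ^p → ℝ^{n×m} are the partial Fréchet derivatives of P. -/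

import Mathlib

open Finset

open Real Filter Topology


/-- Gibbs / entropy inequality termwise. -/
lemma gibbs_term (q c : ℝ) (hq : 0 ≤ q) (hc : 0 < c) :
    c - q + q * (Real.log q - Real.log c) ≥ 0 := by
  rcases eq_or_lt_of_le hq with h | h
  · simp [← h]; positivity
  · have ht : 0 < c / q := by positivity
    have := Real.log_le_sub_one_of_pos ht
    have hlog : Real.log (c / q) = Real.log c - Real.log q := Real.log_div (ne_of_gt hc) (ne_of_gt h)
    rw [hlog] at this
    have h2 : q * (Real.log c - Real.log q) ≤ q * (c/q - 1) :=
      mul_le_mul_of_nonneg_left this h.le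
    have h3 : q * (c/q - 1) = c - q := by field_simp
    nlinarith

/-- Positive row-stochastic matrix: harmonic vectors are constant. -/
lemma perron_const {n : ℕ} (hn : 0 < n) (A : Fin n → Fin n → ℝ)
    (hpos : ∀ i k, 0 < A i k) (hrow : ∀ i, ∑ k, A i k = 1)
    (y : Fin n → ℝ) (hy : ∀ i, y i = ∑ k, A i k * y k) :
    ∀ i i', y i = y i' := by
  have hne : (Finset.univ : Finset (Fin n)).Nonempty := univ_nonempty_iff.2 ⟨⟨0, hn⟩⟩
  obtain ⟨i₀, hi₀mem, hi₀⟩ := Finset.exists_max_image Finset.univ y hne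
  set M := y i₀ with hM
  have hle : ∀ k, y k ≤ M := fun k => hi₀ k (mem_univ k)
  have hall : ∀ k, y k = M := by
    by_contra hcon
    push_neg at hcon
    obtain ⟨k, hk⟩ := hcon
    have hklt : y k < M := lt_of_le_of_ne (hle k) hk
    have : M < M := by
      calc M = ∑ k', A i₀ k' * y k' := hy i₀
        _ < ∑ k', A i₀ k' * M := by
            apply Finset.sum_lt_sum
            · intro k' _; exact mul_le_mul_of_nonneg_left (hle k') (hpos i₀ k').le
            · exact ⟨k, mem_univ k, by nlinarith [hpos i₀ k]⟩
        _ = M := by rw [← Finset.sum_mul, hrow i₀, one_mul]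
    exact lt_irrefl _ this
  intro i i'; rw [hall i, hall i']


set_option maxHeartbeats 1000000 in
/-- Expression of the derivative of the entropic optimal transport plan: with
`A θ = ∂F/∂x (x̄ θ, θ)` and `B θ = ∂F/∂θ (x̄ θ, θ)`, the linear map
`I - A θ + 1ₙ a(θ)ᵀ` is invertible (with inverse `R`), and for every `h`,
`dP̂/dθ (θ) h = ∂P/∂x (x̄ θ, θ) (R (B θ h)) + ∂P/∂θ (x̄ θ, θ) h`. -/
theorem entropic_ot_derivative_formula
    (n m p : ℕ) (hn : 0 < n) (hm : 0 < m) (hp : 0 < p)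
    (Ω : Set (Fin p → ℝ)) (hΩ_open : IsOpen Ω) (hΩ_conn : IsConnected Ω)
    (C : (Fin p → ℝ) → Fin n → Fin m → ℝ)
    (a : (Fin p → ℝ) → Fin n → ℝ) (b : (Fin p → ℝ) → Fin m → ℝ)
    (ε : (Fin p → ℝ) → ℝ)
    (hC : ContDiffOn ℝ 2 C Ω) (ha : ContDiffOn ℝ 2 a Ω)
    (hb : ContDiffOn ℝ 2 b Ω) (hε : ContDiffOn ℝ 2 ε Ω)
    (ha_pos : ∀ θ ∈ Ω, ∀ i, 0 < a θ i) (ha_sum : ∀ θ ∈ Ω, ∑ i, a θ i = 1)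
    (hb_pos : ∀ θ ∈ Ω, ∀ j, 0 < b θ j) (hb_sum : ∀ θ ∈ Ω, ∑ j, b θ j = 1)
    (hε_pos : ∀ θ ∈ Ω, 0 < ε θ)
    (K : (Fin p → ℝ) → Fin n → Fin m → ℝ)
    (hK : ∀ θ i j, K θ i j = Real.exp (-(C θ i j) / ε θ))
    (F : (Fin n → ℝ) → (Fin p → ℝ) → Fin n → ℝ)
    (hF : ∀ y θ i, F y θ i = Real.log (a θ i) -
      Real.log (∑ j, K θ i j * (b θ j / ∑ i', K θ i' j * Real.exp (y i'))))
    (P : (Fin n → ℝ) → (Fin p → ℝ) → Fin n → Fin m → ℝ)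
    (hP : ∀ y θ i j, P y θ i j =
      Real.exp (y i) * K θ i j * (b θ j / ∑ i', K θ i' j * Real.exp (y i')))
    -- `x̄ θ` is any fixed point of `F (·, θ)`
    (xbar : (Fin p → ℝ) → Fin n → ℝ)
    (hxbar : ∀ θ ∈ Ω, F (xbar θ) θ = xbar θ)
    -- the transportation polytope, the entropic objective, and the unique minimizer
    (U : (Fin p → ℝ) → Set (Fin n → Fin m → ℝ))
    (hU : ∀ θ, U θ = {Q : Fin n → Fin m → ℝ |
      (∀ i j, 0 ≤ Q i j) ∧ (∀ i, ∑ j, Q i j = a θ i) ∧ (∀ j, ∑ i, Q i j = b θ j)})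
    (L : (Fin p → ℝ) → (Fin n → Fin m → ℝ) → ℝ)
    (hL : ∀ θ Q, L θ Q = (∑ i, ∑ j, Q i j * C θ i j) -
      ε θ * (-(∑ i, ∑ j, Q i j * (Real.log (Q i j) - 1))))
    (Phat : (Fin p → ℝ) → Fin n → Fin m → ℝ)
    (hPhat : ∀ θ ∈ Ω, Phat θ ∈ U θ ∧
      ∀ Q ∈ U θ, Q ≠ Phat θ → L θ (Phat θ) < L θ Q)
    (hPhat_eq : ∀ θ ∈ Ω, Phat θ = P (xbar θ) θ) :
    ∀ θ ∈ Ω, ∃ R : (Fin n → ℝ) →L[ℝ] (Fin n → ℝ),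
      -- `R` is a two-sided inverse of `y ↦ (I - A θ + 1ₙ a(θ)ᵀ) y`
      (∀ y : Fin n → ℝ,
        R (y - fderiv ℝ (fun z => F z θ) (xbar θ) y +
            (∑ i, a θ i * y i) • (fun _ => (1 : ℝ))) = y) ∧
      (∀ y : Fin n → ℝ,
        R y - fderiv ℝ (fun z => F z θ) (xbar θ) (R y) +
            (∑ i, a θ i * R y i) • (fun _ => (1 : ℝ)) = y) ∧
      -- the derivative of the entropic optimal transport plan
      (∀ h : Fin p → ℝ,
        fderiv ℝ Phat θ h =
          fderiv ℝ (fun z => P z θ) (xbar θ)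
              (R (fderiv ℝ (fun θ' => F (xbar θ) θ') θ h)) +
            fderiv ℝ (fun θ' => P (xbar θ) θ') θ h) := by
  classical
  -- basic facts about K
  have hKpos : ∀ θ i j, 0 < K θ i j := fun θ i j => by rw [hK]; exact Real.exp_pos _
  have hlogK : ∀ θ i j, Real.log (K θ i j) = -(C θ i j) / ε θ := fun θ i j => by
    rw [hK, Real.log_exp]
  -- replace F and P by their formulas
  have hFeq : F = fun y θ i => Real.log (a θ i) -
      Real.log (∑ j, K θ i j * (b θ j / ∑ i', K θ i' j * Real.exp (y i'))) := by
    funext y θ i; exact hF y θ i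
  have hPeq : P = fun y θ i j =>
      Real.exp (y i) * K θ i j * (b θ j / ∑ i', K θ i' j * Real.exp (y i')) := by
    funext y θ i j; exact hP y θ i j
  subst hFeq hPeq
  intro θ0 hθ0
  have hΩn : Ω ∈ 𝓝 θ0 := hΩ_open.mem_nhds hθ0
  -- positivity of denominators
  have hsum_pos : ∀ (y : Fin n → ℝ) (θ : Fin p → ℝ) (j : Fin m),
      0 < ∑ i', K θ i' j * Real.exp (y i') := by
    intro y θ j
    apply Finset.sum_pos (fun i _ => mul_pos (hKpos θ i j) (Real.exp_pos _))
    exact univ_nonempty_iff.2 ⟨⟨0, hn⟩⟩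
  have hPh_pos : ∀ (y : Fin n → ℝ) (θ : Fin p → ℝ), θ ∈ Ω → ∀ i,
      0 < ∑ j, K θ i j * (b θ j / ∑ i', K θ i' j * Real.exp (y i')) := by
    intro y θ hθ i
    apply Finset.sum_pos
    · intro j _
      exact mul_pos (hKpos θ i j) (div_pos (hb_pos θ hθ j) (hsum_pos y θ j))
    · exact univ_nonempty_iff.2 ⟨⟨0, hm⟩⟩
  set x0 := xbar θ0 with hx0def
  set z0 : (Fin n → ℝ) × (Fin p → ℝ) := (x0, θ0) with hz0def
  -- smoothness of components in θ
  have hεne : ε θ0 ≠ 0 := ne_of_gt (hε_pos θ0 hθ0)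
  have hCcd : ∀ i j, ContDiffAt ℝ 1 (fun θ => C θ i j) θ0 := fun i j =>
    ((contDiffAt_pi.1 (contDiffAt_pi.1 (hC.contDiffAt hΩn) i) j).of_le one_le_two)
  have hεcd : ContDiffAt ℝ 1 ε θ0 := (hε.contDiffAt hΩn).of_le one_le_two
  have hKcd : ∀ i j, ContDiffAt ℝ 1 (fun θ => K θ i j) θ0 := by
    intro i j
    have : (fun θ => K θ i j) = fun θ => Real.exp (-(C θ i j) / ε θ) := by
      funext θ; exact hK θ i j
    rw [this]
    exact (((hCcd i j).neg).div hεcd hεne).exp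
  have hacd : ∀ i, ContDiffAt ℝ 1 (fun θ => a θ i) θ0 := fun i =>
    (contDiffAt_pi.1 (ha.contDiffAt hΩn) i).of_le one_le_two
  have hbcd : ∀ j, ContDiffAt ℝ 1 (fun θ => b θ j) θ0 := fun j =>
    (contDiffAt_pi.1 (hb.contDiffAt hΩn) j).of_le one_le_two
  -- the joint functions
  set Fj : (Fin n → ℝ) × (Fin p → ℝ) → Fin n → ℝ := fun q i =>
    Real.log (a q.2 i) -
      Real.log (∑ j, K q.2 i j * (b q.2 j / ∑ i', K q.2 i' j * Real.exp (q.1 i'))) with hFjdef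
  set Pj : (Fin n → ℝ) × (Fin p → ℝ) → Fin n → Fin m → ℝ := fun q i j =>
    Real.exp (q.1 i) * K q.2 i j * (b q.2 j / ∑ i', K q.2 i' j * Real.exp (q.1 i')) with hPjdef
  -- joint smoothness
  have hsnd : ContDiffAt ℝ 1 (Prod.snd : (Fin n → ℝ) × (Fin p → ℝ) → (Fin p → ℝ)) z0 :=
    contDiffAt_snd
  have hKq : ∀ i j, ContDiffAt ℝ 1 (fun q : (Fin n → ℝ) × (Fin p → ℝ) => K q.2 i j) z0 :=
    fun i j => ((hKcd i j).comp z0 hsnd : ContDiffAt ℝ 1 ((fun θ => K θ i j) ∘ Prod.snd) z0)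
  have hbq : ∀ j, ContDiffAt ℝ 1 (fun q : (Fin n → ℝ) × (Fin p → ℝ) => b q.2 j) z0 :=
    fun j => ((hbcd j).comp z0 hsnd : ContDiffAt ℝ 1 ((fun θ => b θ j) ∘ Prod.snd) z0)
  have haq : ∀ i, ContDiffAt ℝ 1 (fun q : (Fin n → ℝ) × (Fin p → ℝ) => a q.2 i) z0 :=
    fun i => ((hacd i).comp z0 hsnd : ContDiffAt ℝ 1 ((fun θ => a θ i) ∘ Prod.snd) z0)
  have hexpq : ∀ i', ContDiffAt ℝ 1
      (fun q : (Fin n → ℝ) × (Fin p → ℝ) => Real.exp (q.1 i')) z0 :=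
    fun i' => ((contDiff_pi.1 contDiff_fst i').contDiffAt).exp
  have hsq : ∀ j, ContDiffAt ℝ 1
      (fun q : (Fin n → ℝ) × (Fin p → ℝ) => ∑ i', K q.2 i' j * Real.exp (q.1 i')) z0 :=
    fun j => ContDiffAt.sum (fun i' _ => (hKq i' j).mul (hexpq i'))
  have hsqne : ∀ j, (∑ i', K z0.2 i' j * Real.exp (z0.1 i')) ≠ 0 :=
    fun j => ne_of_gt (hsum_pos z0.1 z0.2 j)
  have hPhq : ∀ i, ContDiffAt ℝ 1 (fun q : (Fin n → ℝ) × (Fin p → ℝ) =>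
      ∑ j, K q.2 i j * (b q.2 j / ∑ i', K q.2 i' j * Real.exp (q.1 i'))) z0 :=
    fun i => ContDiffAt.sum (fun j _ => (hKq i j).mul (((hbq j).div (hsq j) (hsqne j))))
  have hFjcd : ContDiffAt ℝ 1 Fj z0 := by
    rw [hFjdef]
    exact contDiffAt_pi.2 fun i =>
      ((haq i).log (ne_of_gt (ha_pos θ0 hθ0 i))).sub
        ((hPhq i).log (ne_of_gt (hPh_pos z0.1 z0.2 hθ0 i)))
  have hPjcd : ContDiffAt ℝ 1 Pj z0 := by
    rw [hPjdef]
    exact contDiffAt_pi.2 fun i => contDiffAt_pi.2 fun j =>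
      (((hexpq i).mul (hKq i j)).mul ((hbq j).div (hsq j) (hsqne j)))
  set Fder := fderiv ℝ Fj z0 with hFderdef
  set Pder := fderiv ℝ Pj z0 with hPderdef
  have hFder : HasStrictFDerivAt Fj Fder z0 := hFjcd.hasStrictFDerivAt one_ne_zero
  have hPder : HasStrictFDerivAt Pj Pder z0 := hPjcd.hasStrictFDerivAt one_ne_zero
  -- partial derivatives
  have hApart : HasFDerivAt (fun z => Fj (z, θ0))
      (Fder.comp (ContinuousLinearMap.inl ℝ (Fin n → ℝ) (Fin p → ℝ))) x0 :=
    HasFDerivAt.comp (g := Fj) (f := fun e => (e, θ0)) x0 hFder.hasFDerivAt (hasFDerivAt_prodMk_left x0 θ0)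
  have hBpart : HasFDerivAt (fun θ' => Fj (x0, θ'))
      (Fder.comp (ContinuousLinearMap.inr ℝ (Fin n → ℝ) (Fin p → ℝ))) θ0 :=
    HasFDerivAt.comp (g := Fj) (f := fun e => (x0, e)) θ0 hFder.hasFDerivAt (hasFDerivAt_prodMk_right x0 θ0)
  have hPxpart : HasFDerivAt (fun z => Pj (z, θ0))
      (Pder.comp (ContinuousLinearMap.inl ℝ (Fin n → ℝ) (Fin p → ℝ))) x0 :=
    HasFDerivAt.comp (g := Pj) (f := fun e => (e, θ0)) x0 hPder.hasFDerivAt (hasFDerivAt_prodMk_left x0 θ0)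
  have hPtpart : HasFDerivAt (fun θ' => Pj (x0, θ'))
      (Pder.comp (ContinuousLinearMap.inr ℝ (Fin n → ℝ) (Fin p → ℝ))) θ0 :=
    HasFDerivAt.comp (g := Pj) (f := fun e => (x0, e)) θ0 hPder.hasFDerivAt (hasFDerivAt_prodMk_right x0 θ0)
  -- scalar data at the base point
  set sd : Fin m → ℝ := fun j => ∑ i', K θ0 i' j * Real.exp (x0 i') with hsddef
  set Ph : Fin n → ℝ := fun i => ∑ j, K θ0 i j * (b θ0 j / sd j) with hPhdef
  have hsdpos : ∀ j, 0 < sd j := fun j => hsum_pos x0 θ0 j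
  have hPhpos : ∀ i, 0 < Ph i := fun i => hPh_pos x0 θ0 hθ0 i
  -- the fixed point equation at θ0
  have hfixpt : ∀ i, Real.log (a θ0 i) - Real.log (Ph i) = x0 i := by
    intro i
    have h := congrFun (hxbar θ0 hθ0) i
    simpa using h
  have ha_exp : ∀ i, a θ0 i = Real.exp (x0 i) * Ph i := by
    intro i
    have h1 : Real.log (a θ0 i) = x0 i + Real.log (Ph i) := by linarith [hfixpt i]
    calc a θ0 i = Real.exp (Real.log (a θ0 i)) := (Real.exp_log (ha_pos θ0 hθ0 i)).symm
      _ = Real.exp (x0 i) * Real.exp (Real.log (Ph i)) := by rw [h1, Real.exp_add]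
      _ = Real.exp (x0 i) * Ph i := by rw [Real.exp_log (hPhpos i)]
  -- entries of the partial derivative in x
  set Aent : Fin n → Fin n → ℝ := fun i k =>
    (∑ j, K θ0 i j * (b θ0 j * (K θ0 k j * Real.exp (x0 k)) / sd j ^ 2)) / Ph i with hAentdef
  have hAent : ∀ i k, Fder ((Pi.single k 1 : Fin n → ℝ), (0 : Fin p → ℝ)) i = Aent i k := by
    intro i k
    set v : Fin n → ℝ := Pi.single k 1 with hvdef
    -- the curve t ↦ (x0 + t • v, θ0)
    have hline : HasDerivAt (fun t : ℝ => x0 + t • v) v 0 := by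
      have h1 : HasDerivAt (fun t : ℝ => t • v) ((1:ℝ) • v) 0 :=
        (hasDerivAt_id (0:ℝ)).smul_const v
      simpa using h1.const_add x0
    have hcurve : HasDerivAt
        (fun t : ℝ => ((x0 + t • v, θ0) : (Fin n → ℝ) × (Fin p → ℝ))) ((v, 0)) 0 :=
      hline.prodMk (hasDerivAt_const 0 θ0)
    have hz : ((x0 + (0:ℝ) • v, θ0) : (Fin n → ℝ) × (Fin p → ℝ)) = z0 := by
      simp [hz0def]
    have hFz : HasFDerivAt Fj Fder (x0 + (0:ℝ) • v, θ0) := by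
      rw [hz]; exact hFder.hasFDerivAt
    have hcomp : HasDerivAt (fun t : ℝ => Fj (x0 + t • v, θ0)) (Fder (v, 0)) 0 :=
      HasFDerivAt.comp_hasDerivAt (l := Fj)
        (f := fun t : ℝ => ((x0 + t • v, θ0) : (Fin n → ℝ) × (Fin p → ℝ))) 0 hFz hcurve
    have hcompi : HasDerivAt (fun t : ℝ => Fj (x0 + t • v, θ0) i) (Fder (v, 0) i) 0 :=
      (ContinuousLinearMap.proj i :
        ((Fin n → ℝ) →L[ℝ] ℝ)).hasFDerivAt.comp_hasDerivAt 0 hcomp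
    -- explicit scalar derivative
    have hsj : ∀ j, HasDerivAt
        (fun t : ℝ => ∑ i', K θ0 i' j * Real.exp (x0 i' + t * v i'))
        (K θ0 k j * Real.exp (x0 k)) 0 := by
      intro j
      have h0 : HasDerivAt
          (fun t : ℝ => ∑ i', K θ0 i' j * Real.exp (x0 i' + t * v i'))
          (∑ i', K θ0 i' j * (Real.exp (x0 i') * v i')) 0 := by
        apply HasDerivAt.fun_sum
        intro i' _
        have hb1 : HasDerivAt (fun t : ℝ => x0 i' + t * v i') (v i') 0 := by
          simpa using ((hasDerivAt_id (0:ℝ)).mul_const (v i')).const_add (x0 i')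
        simpa using hb1.exp.const_mul (K θ0 i' j)
      convert h0 using 1
      rw [Finset.sum_eq_single k]
      · simp [hvdef]
      · intro i' _ hne
        simp [hvdef, Pi.single_eq_of_ne hne]
      · intro hk
        exact absurd (Finset.mem_univ k) hk
    have hquot : ∀ j, HasDerivAt
        (fun t : ℝ => b θ0 j / ∑ i', K θ0 i' j * Real.exp (x0 i' + t * v i'))
        (-(b θ0 j * (K θ0 k j * Real.exp (x0 k)) / sd j ^ 2)) 0 := by
      intro j
      have hne : (∑ i', K θ0 i' j * Real.exp (x0 i' + 0 * v i')) ≠ 0 := by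
        have := hsdpos j
        simpa [hsddef] using ne_of_gt this
      have h0 := (hasDerivAt_const (0:ℝ) (b θ0 j)).fun_div (hsj j) hne
      refine h0.congr_deriv ?_
      have hval : (∑ i', K θ0 i' j * Real.exp (x0 i' + 0 * v i')) = sd j := by
        simp [hsddef]
      rw [hval]
      ring
    have hPht : HasDerivAt
        (fun t : ℝ => ∑ j, K θ0 i j * (b θ0 j / ∑ i', K θ0 i' j * Real.exp (x0 i' + t * v i')))
        (∑ j, K θ0 i j * (-(b θ0 j * (K θ0 k j * Real.exp (x0 k)) / sd j ^ 2))) 0 :=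
      HasDerivAt.fun_sum (fun j _ => (hquot j).const_mul (K θ0 i j))
    have hPhne : (∑ j, K θ0 i j * (b θ0 j / ∑ i', K θ0 i' j * Real.exp (x0 i' + 0 * v i'))) ≠ 0 := by
      have := hPhpos i
      simpa [hPhdef, hsddef] using ne_of_gt this
    have hlog := hPht.log hPhne
    have hfull := hlog.const_sub (Real.log (a θ0 i))
    have huniq := hcompi.unique hfull
    rw [huniq, hAentdef]
    have hval : (∑ j, K θ0 i j * (b θ0 j / ∑ i', K θ0 i' j * Real.exp (x0 i' + 0 * v i'))) = Ph i := by
      simp [hPhdef, hsddef]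
    rw [hval]
    simp only [mul_neg, Finset.sum_neg_distrib, neg_div, neg_neg]
  -- structural properties of the matrix Aent
  have huniv_n : (Finset.univ : Finset (Fin n)).Nonempty := univ_nonempty_iff.2 ⟨⟨0, hn⟩⟩
  have huniv_m : (Finset.univ : Finset (Fin m)).Nonempty := univ_nonempty_iff.2 ⟨⟨0, hm⟩⟩
  have hAentpos : ∀ i k, 0 < Aent i k := by
    intro i k
    simp only [hAentdef]
    apply div_pos _ (hPhpos i)
    apply Finset.sum_pos _ huniv_m
    intro j _
    have h1 := hKpos θ0 i j
    have h2 := hb_pos θ0 hθ0 j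
    have h3 := hKpos θ0 k j
    have h4 := hsdpos j
    positivity
  have hsd_eq : ∀ j, sd j = ∑ i', K θ0 i' j * Real.exp (x0 i') := fun j => rfl
  have hPh_eq : ∀ i, Ph i = ∑ j, K θ0 i j * (b θ0 j / sd j) := fun i => rfl
  have hArow : ∀ i, ∑ k, Aent i k = 1 := by
    intro i
    simp only [hAentdef]
    rw [← Finset.sum_div, div_eq_one_iff_eq (ne_of_gt (hPhpos i)), Finset.sum_comm, hPh_eq]
    apply Finset.sum_congr rfl
    intro j _
    rw [← Finset.mul_sum]
    congr 1
    have hstep : ∑ k, b θ0 j * (K θ0 k j * Real.exp (x0 k)) / sd j ^ 2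
        = b θ0 j * sd j / sd j ^ 2 := by
      rw [← Finset.sum_div, ← Finset.mul_sum, hsd_eq]
    rw [hstep]
    field_simp [ne_of_gt (hsdpos j)]
  have hAcol : ∀ k, ∑ i, a θ0 i * Aent i k = a θ0 k := by
    intro k
    simp only [hAentdef]
    have h1 : ∀ i, a θ0 i *
        ((∑ j, K θ0 i j * (b θ0 j * (K θ0 k j * Real.exp (x0 k)) / sd j ^ 2)) / Ph i)
        = ∑ j, Real.exp (x0 i) * (K θ0 i j * (b θ0 j * (K θ0 k j * Real.exp (x0 k)) / sd j ^ 2)) := by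
      intro i
      have hfrac : a θ0 i / Ph i = Real.exp (x0 i) := by
        rw [ha_exp i, mul_div_assoc, div_self (ne_of_gt (hPhpos i)), mul_one]
      calc a θ0 i * ((∑ j, K θ0 i j * (b θ0 j * (K θ0 k j * Real.exp (x0 k)) / sd j ^ 2)) / Ph i)
          = (a θ0 i / Ph i) * (∑ j, K θ0 i j * (b θ0 j * (K θ0 k j * Real.exp (x0 k)) / sd j ^ 2)) := by
            ring
        _ = Real.exp (x0 i) * (∑ j, K θ0 i j * (b θ0 j * (K θ0 k j * Real.exp (x0 k)) / sd j ^ 2)) := by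
            rw [hfrac]
        _ = ∑ j, Real.exp (x0 i) * (K θ0 i j * (b θ0 j * (K θ0 k j * Real.exp (x0 k)) / sd j ^ 2)) := by
            rw [Finset.mul_sum]
    rw [Finset.sum_congr rfl (fun i _ => h1 i), Finset.sum_comm]
    have h2 : ∀ j, ∑ i, Real.exp (x0 i) * (K θ0 i j * (b θ0 j * (K θ0 k j * Real.exp (x0 k)) / sd j ^ 2))
        = Real.exp (x0 k) * (K θ0 k j * (b θ0 j / sd j)) := by
      intro j
      have h3 : ∑ i, Real.exp (x0 i) * (K θ0 i j * (b θ0 j * (K θ0 k j * Real.exp (x0 k)) / sd j ^ 2))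
          = (b θ0 j * (K θ0 k j * Real.exp (x0 k)) / sd j ^ 2) * ∑ i, K θ0 i j * Real.exp (x0 i) := by
        rw [Finset.mul_sum]
        exact Finset.sum_congr rfl fun i _ => by ring
      rw [h3, ← hsd_eq]
      field_simp [ne_of_gt (hsdpos j)]
    rw [Finset.sum_congr rfl (fun j _ => h2 j), ← Finset.mul_sum, ← hPh_eq, ← ha_exp k]
  have hAexp : ∀ (w : Fin n → ℝ) i, Fder (w, (0 : Fin p → ℝ)) i = ∑ k, Aent i k * w k := by
    intro w i
    have hw : ((w, (0 : Fin p → ℝ)) : (Fin n → ℝ) × (Fin p → ℝ))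
        = ∑ k, (w k) • (((Pi.single k 1 : Fin n → ℝ), (0 : Fin p → ℝ)) : (Fin n → ℝ) × (Fin p → ℝ)) := by
      apply Prod.ext <;>
        simp [Prod.fst_sum, Prod.snd_sum, ← Pi.single_smul, Finset.univ_sum_single]
    rw [hw, map_sum]
    rw [Finset.sum_apply]
    simp only [map_smul, Pi.smul_apply, smul_eq_mul]
    exact Finset.sum_congr rfl fun k _ => by rw [hAent i k]; ring
  -- the operator T = I - A + 1 aᵀ and its inverse R
  obtain ⟨S, hS⟩ : ∃ S : (Fin n → ℝ) →L[ℝ] (Fin n → ℝ),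
      ∀ y, S y = (∑ i, a θ0 i * y i) • (fun _ => (1:ℝ)) := by
    refine ⟨LinearMap.toContinuousLinearMap
      { toFun := fun y => (∑ i, a θ0 i * y i) • (fun _ => (1:ℝ))
        map_add' := by
          intro y z
          simp only [Pi.add_apply, mul_add, Finset.sum_add_distrib, add_smul]
        map_smul' := by
          intro c y
          simp only [Pi.smul_apply, smul_eq_mul, RingHom.id_apply, smul_smul]
          congr 1
          rw [Finset.mul_sum]
          exact Finset.sum_congr rfl (fun i _ => by ring) }, fun y => rfl⟩
  set T : (Fin n → ℝ) →L[ℝ] (Fin n → ℝ) :=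
    ContinuousLinearMap.id ℝ (Fin n → ℝ)
      - Fder.comp (ContinuousLinearMap.inl ℝ (Fin n → ℝ) (Fin p → ℝ)) + S with hTdef
  have hTapp : ∀ y, T y = y - Fder (y, (0 : Fin p → ℝ)) + (∑ i, a θ0 i * y i) • (fun _ => (1:ℝ)) := by
    intro y
    rw [hTdef]
    rw [ContinuousLinearMap.add_apply, ContinuousLinearMap.sub_apply,
      ContinuousLinearMap.comp_apply, ContinuousLinearMap.inl_apply,
      ContinuousLinearMap.id_apply, hS]
  have hTinj : Function.Injective T := by
    rw [injective_iff_map_eq_zero]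
    intro y hy
    rw [hTapp] at hy
    have hyi : ∀ i, y i - Fder (y, (0 : Fin p → ℝ)) i + (∑ i', a θ0 i' * y i') = 0 := by
      intro i
      have := congrFun hy i
      simpa using this
    have h1 : ∑ i, a θ0 i * Fder (y, (0 : Fin p → ℝ)) i = ∑ i', a θ0 i' * y i' := by
      calc ∑ i, a θ0 i * Fder (y, (0 : Fin p → ℝ)) i
          = ∑ i, ∑ k, a θ0 i * (Aent i k * y k) := by
            exact Finset.sum_congr rfl fun i _ => by rw [hAexp y i, Finset.mul_sum]
        _ = ∑ k, ∑ i, a θ0 i * (Aent i k * y k) := Finset.sum_comm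
        _ = ∑ k, (∑ i, a θ0 i * Aent i k) * y k := by
            exact Finset.sum_congr rfl fun k _ => by
              rw [Finset.sum_mul]
              exact Finset.sum_congr rfl fun i _ => by ring
        _ = ∑ k, a θ0 k * y k := by
            exact Finset.sum_congr rfl fun k _ => by rw [hAcol k]
    have hsum0 : ∑ i, a θ0 i * (y i - Fder (y, (0 : Fin p → ℝ)) i + (∑ i', a θ0 i' * y i')) = 0 := by
      rw [Finset.sum_congr rfl fun i _ => by rw [hyi i]]
      simp
    have hexp2 : ∑ i, a θ0 i * (y i - Fder (y, (0 : Fin p → ℝ)) i + (∑ i', a θ0 i' * y i'))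
        = ∑ i', a θ0 i' * y i' := by
      have hdistr : ∀ i, a θ0 i * (y i - Fder (y, (0 : Fin p → ℝ)) i + (∑ i', a θ0 i' * y i'))
          = a θ0 i * y i - a θ0 i * Fder (y, (0 : Fin p → ℝ)) i
            + a θ0 i * (∑ i', a θ0 i' * y i') := fun i => by ring
      rw [Finset.sum_congr rfl fun i _ => hdistr i, Finset.sum_add_distrib,
        Finset.sum_sub_distrib, h1, ← Finset.sum_mul, ha_sum θ0 hθ0, one_mul]
      ring
    have hw0 : ∑ i', a θ0 i' * y i' = 0 := by rw [← hexp2, hsum0]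
    have hyA : ∀ i, y i = ∑ k, Aent i k * y k := by
      intro i
      have h2 := hyi i
      rw [hw0, add_zero] at h2
      rw [← hAexp y i]
      linarith
    have hconst := perron_const hn Aent hAentpos hArow y hyA
    funext i
    have h3 : ∑ i', a θ0 i' * y i' = y i := by
      calc ∑ i', a θ0 i' * y i' = ∑ i', a θ0 i' * y i := by
            exact Finset.sum_congr rfl fun i' _ => by rw [hconst i' i]
        _ = (∑ i', a θ0 i') * y i := by rw [Finset.sum_mul]
        _ = y i := by rw [ha_sum θ0 hθ0, one_mul]
    have : y i = 0 := by rw [← h3, hw0]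
    simpa using this
  have hTbij : Function.Bijective T := by
    refine ⟨hTinj, ?_⟩
    have := (LinearMap.injective_iff_surjective
      (f := (T : (Fin n → ℝ) →ₗ[ℝ] (Fin n → ℝ)))).1 hTinj
    exact this
  obtain ⟨R, hR1, hR2⟩ : ∃ R : (Fin n → ℝ) →L[ℝ] (Fin n → ℝ),
      (∀ y, R (T y) = y) ∧ (∀ y, T (R y) = y) := by
    set eT := LinearEquiv.ofBijective (T : (Fin n → ℝ) →ₗ[ℝ] (Fin n → ℝ)) hTbij with heT
    refine ⟨(eT.toContinuousLinearEquiv.symm : (Fin n → ℝ) →L[ℝ] (Fin n → ℝ)), ?_, ?_⟩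
    · intro y
      exact eT.toContinuousLinearEquiv.symm_apply_apply y
    · intro y
      exact eT.toContinuousLinearEquiv.apply_symm_apply y
  -- the auxiliary map G and the inverse function theorem
  set c0 : ℝ := ∑ i, a θ0 i * x0 i with hc0def
  set G : (Fin n → ℝ) × (Fin p → ℝ) → (Fin n → ℝ) := fun q =>
    q.1 - Fj q + ((∑ i, a θ0 i * q.1 i) - c0) • (fun _ => (1:ℝ)) with hGdef
  set Gder : ((Fin n → ℝ) × (Fin p → ℝ)) →L[ℝ] (Fin n → ℝ) :=
    ContinuousLinearMap.fst ℝ (Fin n → ℝ) (Fin p → ℝ) - Fder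
      + S.comp (ContinuousLinearMap.fst ℝ (Fin n → ℝ) (Fin p → ℝ)) with hGderdef
  have hGstrict : HasStrictFDerivAt G Gder z0 := by
    have h1 : HasStrictFDerivAt (fun q : (Fin n → ℝ) × (Fin p → ℝ) => q.1)
        (ContinuousLinearMap.fst ℝ (Fin n → ℝ) (Fin p → ℝ)) z0 :=
      (ContinuousLinearMap.fst ℝ (Fin n → ℝ) (Fin p → ℝ)).hasStrictFDerivAt
    have h3 := ((S.comp (ContinuousLinearMap.fst ℝ (Fin n → ℝ) (Fin p → ℝ))).hasStrictFDerivAt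
      (x := z0)).sub_const (c0 • (fun _ => (1:ℝ)))
    have hfun : (fun q : (Fin n → ℝ) × (Fin p → ℝ) =>
        ((∑ i, a θ0 i * q.1 i) - c0) • (fun _ => (1:ℝ)))
        = fun q : (Fin n → ℝ) × (Fin p → ℝ) =>
          (S.comp (ContinuousLinearMap.fst ℝ (Fin n → ℝ) (Fin p → ℝ))) q
            - c0 • (fun _ => (1:ℝ)) := by
      funext q
      rw [ContinuousLinearMap.comp_apply, ContinuousLinearMap.coe_fst', hS, sub_smul]
    have h2 : HasStrictFDerivAt (fun q : (Fin n → ℝ) × (Fin p → ℝ) =>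
        ((∑ i, a θ0 i * q.1 i) - c0) • (fun _ => (1:ℝ)))
        (S.comp (ContinuousLinearMap.fst ℝ (Fin n → ℝ) (Fin p → ℝ))) z0 := by
      rw [hfun]; exact h3
    exact (h1.sub hFder).add h2
  set Psi : (Fin n → ℝ) × (Fin p → ℝ) → (Fin n → ℝ) × (Fin p → ℝ) :=
    fun q => (G q, q.2) with hPsidef
  set Psider := Gder.prod (ContinuousLinearMap.snd ℝ (Fin n → ℝ) (Fin p → ℝ)) with hPsiderdef
  have hPsistrict : HasStrictFDerivAt Psi Psider z0 :=
    hGstrict.prodMk (ContinuousLinearMap.snd ℝ (Fin n → ℝ) (Fin p → ℝ)).hasStrictFDerivAt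
  have hGderapp : ∀ vq : (Fin n → ℝ) × (Fin p → ℝ),
      Gder vq = vq.1 - Fder vq + (∑ i, a θ0 i * vq.1 i) • (fun _ => (1:ℝ)) := by
    intro vq
    rw [hGderdef, ContinuousLinearMap.add_apply, ContinuousLinearMap.sub_apply,
      ContinuousLinearMap.comp_apply, ContinuousLinearMap.coe_fst', hS]
  have hPsiderbij : Function.Bijective Psider := by
    have hinj : Function.Injective Psider := by
      rw [injective_iff_map_eq_zero]
      intro v hv
      have hv2 : v.2 = 0 := congrArg Prod.snd hv
      have hv1 : Gder v = 0 := congrArg Prod.fst hv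
      have hveq : v = ((v.1, (0 : Fin p → ℝ)) : (Fin n → ℝ) × (Fin p → ℝ)) := by
        rw [← hv2]
      have hT1 : T v.1 = 0 := by
        rw [hTapp]
        rw [hveq] at hv1
        rw [hGderapp] at hv1
        exact hv1
      have hv10 : v.1 = 0 := hTinj (by rw [hT1, map_zero])
      rw [hveq, hv10]
      rfl
    refine ⟨hinj, ?_⟩
    exact (LinearMap.injective_iff_surjective
      (f := (Psider : ((Fin n → ℝ) × (Fin p → ℝ)) →ₗ[ℝ] ((Fin n → ℝ) × (Fin p → ℝ))))).1 hinj
  obtain ⟨ePsi, hePsi⟩ : ∃ e : ((Fin n → ℝ) × (Fin p → ℝ)) ≃L[ℝ] ((Fin n → ℝ) × (Fin p → ℝ)),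
      (e : ((Fin n → ℝ) × (Fin p → ℝ)) →L[ℝ] ((Fin n → ℝ) × (Fin p → ℝ))) = Psider := by
    refine ⟨(LinearEquiv.ofBijective
      (Psider : ((Fin n → ℝ) × (Fin p → ℝ)) →ₗ[ℝ] ((Fin n → ℝ) × (Fin p → ℝ)))
      hPsiderbij).toContinuousLinearEquiv, ?_⟩
    apply ContinuousLinearMap.ext
    intro v
    rfl
  have hPsistrict' : HasStrictFDerivAt Psi
      (ePsi : ((Fin n → ℝ) × (Fin p → ℝ)) →L[ℝ] ((Fin n → ℝ) × (Fin p → ℝ))) z0 := by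
    rw [hePsi]; exact hPsistrict
  have hFjz0 : Fj z0 = x0 := hxbar θ0 hθ0
  have hGz0 : G z0 = 0 := by
    rw [hGdef]
    show z0.1 - Fj z0 + ((∑ i, a θ0 i * z0.1 i) - c0) • (fun _ => (1:ℝ)) = 0
    rw [hFjz0]
    show x0 - x0 + ((∑ i, a θ0 i * x0 i) - c0) • (fun _ => (1:ℝ)) = 0
    rw [← hc0def, sub_self, sub_self, zero_smul, add_zero]
  have hPsiz0 : Psi z0 = (((0 : Fin n → ℝ), θ0) : (Fin n → ℝ) × (Fin p → ℝ)) := by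
    rw [hPsidef]
    show (G z0, z0.2) = (((0 : Fin n → ℝ), θ0) : (Fin n → ℝ) × (Fin p → ℝ))
    rw [hGz0]
  set linv := HasStrictFDerivAt.localInverse Psi ePsi z0 hPsistrict' with hlinvdef
  have hlinv_at : linv (((0 : Fin n → ℝ), θ0)) = z0 := by
    rw [← hPsiz0]
    exact hPsistrict'.localInverse_apply_image
  have hright : ∀ᶠ y in 𝓝 (((0 : Fin n → ℝ), θ0) : (Fin n → ℝ) × (Fin p → ℝ)),
      Psi (linv y) = y := by
    have := hPsistrict'.eventually_right_inverse
    rwa [hPsiz0] at this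
  have htend : Tendsto (fun θ : Fin p → ℝ => (((0 : Fin n → ℝ), θ) : (Fin n → ℝ) × (Fin p → ℝ)))
      (𝓝 θ0) (𝓝 (((0 : Fin n → ℝ), θ0))) :=
    (continuous_const.prodMk continuous_id).tendsto θ0
  have heve : ∀ᶠ θ in 𝓝 θ0, Psi (linv (((0 : Fin n → ℝ), θ))) = (((0 : Fin n → ℝ), θ)) :=
    htend.eventually hright
  set xloc : (Fin p → ℝ) → (Fin n → ℝ) := fun θ => (linv (((0 : Fin n → ℝ), θ))).1 with hxlocdef
  have hGx : ∀ᶠ θ in 𝓝 θ0, G ((xloc θ, θ)) = 0 := by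
    filter_upwards [heve] with θ h
    have h2 : (linv (((0 : Fin n → ℝ), θ))).2 = θ := congrArg Prod.snd h
    have h1 : G (linv (((0 : Fin n → ℝ), θ))) = 0 := congrArg Prod.fst h
    have h3 : (linv (((0 : Fin n → ℝ), θ))) = ((xloc θ, θ) : (Fin n → ℝ) × (Fin p → ℝ)) :=
      Prod.ext rfl h2
    rwa [h3] at h1
  have hxloc0 : xloc θ0 = x0 := congrArg Prod.fst hlinv_at
  have hlinvstrict := hPsistrict'.to_localInverse
  rw [hPsiz0] at hlinvstrict
  set D : (Fin p → ℝ) →L[ℝ] (Fin n → ℝ) :=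
    (ContinuousLinearMap.fst ℝ (Fin n → ℝ) (Fin p → ℝ)).comp
      (((ePsi.symm : ((Fin n → ℝ) × (Fin p → ℝ)) →L[ℝ] ((Fin n → ℝ) × (Fin p → ℝ)))).comp
        (ContinuousLinearMap.inr ℝ (Fin n → ℝ) (Fin p → ℝ))) with hDdef
  have hxD : HasFDerivAt xloc D θ0 := by
    have hin : HasFDerivAt (fun θ : Fin p → ℝ => (((0 : Fin n → ℝ), θ)))
        (ContinuousLinearMap.inr ℝ (Fin n → ℝ) (Fin p → ℝ)) θ0 :=
      hasFDerivAt_prodMk_right (0 : Fin n → ℝ) θ0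
    have hmid := (hlinvstrict.hasFDerivAt).comp θ0 hin
    exact (ContinuousLinearMap.fst ℝ (Fin n → ℝ) (Fin p → ℝ)).hasFDerivAt.comp θ0 hmid
  -- differentiating G (xloc θ, θ) = 0
  have hpair : HasFDerivAt (fun θ : Fin p → ℝ => ((xloc θ, θ) : (Fin n → ℝ) × (Fin p → ℝ)))
      (D.prod (ContinuousLinearMap.id ℝ (Fin p → ℝ))) θ0 :=
    hxD.prodMk (hasFDerivAt_id θ0)
  have hGat : HasFDerivAt G Gder ((xloc θ0, θ0) : (Fin n → ℝ) × (Fin p → ℝ)) := by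
    rw [hxloc0]
    exact hGstrict.hasFDerivAt
  have hGcomp0 : HasFDerivAt
      (G ∘ (fun θ : Fin p → ℝ => ((xloc θ, θ) : (Fin n → ℝ) × (Fin p → ℝ))))
      (Gder.comp (D.prod (ContinuousLinearMap.id ℝ (Fin p → ℝ)))) θ0 := by
    refine HasFDerivAt.comp θ0 ?_ hpair
    exact hGat
  have hGcomp : HasFDerivAt (fun θ : Fin p → ℝ => G ((xloc θ, θ)))
      (Gder.comp (D.prod (ContinuousLinearMap.id ℝ (Fin p → ℝ)))) θ0 := hGcomp0
  have hfzero : fderiv ℝ (fun θ : Fin p → ℝ => G ((xloc θ, θ))) θ0 = 0 := by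
    have hEq : (fun θ : Fin p → ℝ => G ((xloc θ, θ))) =ᶠ[𝓝 θ0]
        (fun _ => (0 : Fin n → ℝ)) := hGx
    rw [hEq.fderiv_eq, fderiv_const_apply]
  have hTD : ∀ h : Fin p → ℝ, T (D h) = Fder (((0 : Fin n → ℝ), h)) := by
    intro h
    have h0 : Gder ((D h, h)) = 0 := by
      have h1 := hGcomp.fderiv
      rw [hfzero] at h1
      have h2 := congrArg (fun (Lm : (Fin p → ℝ) →L[ℝ] (Fin n → ℝ)) => Lm h) h1.symm
      simpa using h2
    have hFadd : Fder ((D h, h)) = Fder ((D h, (0 : Fin p → ℝ))) + Fder (((0 : Fin n → ℝ), h)) := by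
      rw [← map_add]
      congr 1
      rw [Prod.mk_add_mk, add_zero, zero_add]
    have h3 : Gder ((D h, h)) = T (D h) - Fder (((0 : Fin n → ℝ), h)) := by
      rw [hGderapp, hTapp, hFadd]
      show D h - (Fder ((D h, (0:Fin p → ℝ))) + Fder (((0:Fin n → ℝ), h)))
          + (∑ i, a θ0 i * D h i) • (fun _ => (1:ℝ)) = _
      abel
    rw [h3] at h0
    exact sub_eq_zero.1 h0
  -- the summation identity
  have hId : ∀ (y : Fin n → ℝ) (θ : Fin p → ℝ), θ ∈ Ω →
      ∑ i, Real.exp (y i) * (∑ j, K θ i j * (b θ j / ∑ i', K θ i' j * Real.exp (y i'))) = 1 := by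
    intro y θ hθ
    have hswap : ∑ i, Real.exp (y i) * (∑ j, K θ i j * (b θ j / ∑ i', K θ i' j * Real.exp (y i')))
        = ∑ j, (b θ j / ∑ i', K θ i' j * Real.exp (y i')) * (∑ i, K θ i j * Real.exp (y i)) := by
      calc ∑ i, Real.exp (y i) * (∑ j, K θ i j * (b θ j / ∑ i', K θ i' j * Real.exp (y i')))
          = ∑ i, ∑ j, Real.exp (y i) * (K θ i j * (b θ j / ∑ i', K θ i' j * Real.exp (y i'))) := by
            exact Finset.sum_congr rfl fun i _ => Finset.mul_sum _ _ _
        _ = ∑ j, ∑ i, Real.exp (y i) * (K θ i j * (b θ j / ∑ i', K θ i' j * Real.exp (y i'))) :=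
            Finset.sum_comm
        _ = ∑ j, (b θ j / ∑ i', K θ i' j * Real.exp (y i')) * (∑ i, K θ i j * Real.exp (y i)) := by
            refine Finset.sum_congr rfl fun j _ => ?_
            rw [Finset.mul_sum]
            exact Finset.sum_congr rfl fun i _ => by ring
    rw [hswap]
    rw [Finset.sum_congr rfl fun j _ =>
      div_mul_cancel₀ (b θ j) (ne_of_gt (hsum_pos y θ j))]
    exact hb_sum θ hθ
  -- eventually, xloc θ is a fixed point of F (·, θ)
  have hfixloc : ∀ᶠ θ in 𝓝 θ0, Fj ((xloc θ, θ)) = xloc θ := by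
    filter_upwards [hGx, hΩn] with θ hG hθΩ
    set μ : ℝ := (∑ i', a θ0 i' * xloc θ i') - c0 with hμdef
    have hcompi : ∀ i, Fj ((xloc θ, θ)) i = xloc θ i + μ := by
      intro i
      have h1 := congrFun hG i
      simp only [hGdef, Pi.add_apply, Pi.sub_apply, Pi.smul_apply, smul_eq_mul, mul_one,
        Pi.zero_apply] at h1
      rw [hμdef]
      linarith
    have hΦp : ∀ i, 0 < ∑ j, K θ i j * (b θ j / ∑ i', K θ i' j * Real.exp (xloc θ i')) :=
      hPh_pos (xloc θ) θ hθΩ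
    have hkey : ∀ i, Real.exp (xloc θ i)
        * (∑ j, K θ i j * (b θ j / ∑ i', K θ i' j * Real.exp (xloc θ i')))
        = a θ i * Real.exp (-μ) := by
      intro i
      have h2 : Real.log (a θ i)
          - Real.log (∑ j, K θ i j * (b θ j / ∑ i', K θ i' j * Real.exp (xloc θ i')))
          = xloc θ i + μ := hcompi i
      have h3 : Real.log (∑ j, K θ i j * (b θ j / ∑ i', K θ i' j * Real.exp (xloc θ i')))
          = Real.log (a θ i) - xloc θ i - μ := by linarith
      have h4 : (∑ j, K θ i j * (b θ j / ∑ i', K θ i' j * Real.exp (xloc θ i')))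
          = Real.exp (Real.log (a θ i) - xloc θ i - μ) := by
        rw [← h3, Real.exp_log (hΦp i)]
      rw [h4]
      calc Real.exp (xloc θ i) * Real.exp (Real.log (a θ i) - xloc θ i - μ)
          = Real.exp (xloc θ i + (Real.log (a θ i) - xloc θ i - μ)) := (Real.exp_add _ _).symm
        _ = Real.exp (Real.log (a θ i) + -μ) := by ring_nf
        _ = Real.exp (Real.log (a θ i)) * Real.exp (-μ) := Real.exp_add _ _
        _ = a θ i * Real.exp (-μ) := by rw [Real.exp_log (ha_pos θ hθΩ i)]
    have hsum1 := hId (xloc θ) θ hθΩ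
    rw [Finset.sum_congr rfl fun i _ => hkey i, ← Finset.sum_mul, ha_sum θ hθΩ, one_mul]
      at hsum1
    have hμ0 : μ = 0 := by
      have h6 := congrArg Real.log hsum1
      rw [Real.log_exp, Real.log_one] at h6
      linarith
    funext i
    rw [hcompi i, hμ0, add_zero]
  -- eventually, Phat θ = Pj (xloc θ, θ)  (uniqueness of the minimizer)
  have hPhatloc : ∀ᶠ θ in 𝓝 θ0, Phat θ = Pj ((xloc θ, θ)) := by
    filter_upwards [hfixloc, hΩn] with θ hf hθΩ
    set sθ : Fin m → ℝ := fun j => ∑ i', K θ i' j * Real.exp (xloc θ i') with hsθdef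
    have hsp : ∀ j, 0 < sθ j := fun j => hsum_pos (xloc θ) θ j
    have hΦp : ∀ i, 0 < ∑ j, K θ i j * (b θ j / sθ j) := hPh_pos (xloc θ) θ hθΩ
    have hfix_i : ∀ i, Real.log (a θ i) - Real.log (∑ j, K θ i j * (b θ j / sθ j))
        = xloc θ i := fun i => congrFun hf i
    have ha_exp' : ∀ i, a θ i = Real.exp (xloc θ i) * (∑ j, K θ i j * (b θ j / sθ j)) := by
      intro i
      have h1 : Real.log (a θ i) = xloc θ i + Real.log (∑ j, K θ i j * (b θ j / sθ j)) := by
        linarith [hfix_i i]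
      calc a θ i = Real.exp (Real.log (a θ i)) := (Real.exp_log (ha_pos θ hθΩ i)).symm
        _ = Real.exp (xloc θ i) * Real.exp (Real.log (∑ j, K θ i j * (b θ j / sθ j))) := by
            rw [h1, Real.exp_add]
        _ = Real.exp (xloc θ i) * (∑ j, K θ i j * (b θ j / sθ j)) := by
            rw [Real.exp_log (hΦp i)]
    set Q0 : Fin n → Fin m → ℝ :=
      fun i j => Real.exp (xloc θ i) * K θ i j * (b θ j / sθ j) with hQ0def
    have hQ0pos : ∀ i j, 0 < Q0 i j := by
      intro i j
      simp only [hQ0def]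
      exact mul_pos (mul_pos (Real.exp_pos _) (hKpos θ i j))
        (div_pos (hb_pos θ hθΩ j) (hsp j))
    have hQ0row : ∀ i, ∑ j, Q0 i j = a θ i := by
      intro i
      simp only [hQ0def]
      rw [Finset.sum_congr rfl fun j (_ : j ∈ univ) => mul_assoc (Real.exp (xloc θ i)) _ _,
        ← Finset.mul_sum, ← ha_exp' i]
    have hQ0col : ∀ j, ∑ i, Q0 i j = b θ j := by
      intro j
      simp only [hQ0def]
      have h1 : ∑ i, Real.exp (xloc θ i) * K θ i j * (b θ j / sθ j)
          = (b θ j / sθ j) * ∑ i, K θ i j * Real.exp (xloc θ i) := by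
        rw [Finset.mul_sum]
        exact Finset.sum_congr rfl fun i _ => by ring
      rw [h1]
      rw [show (∑ i, K θ i j * Real.exp (xloc θ i)) = sθ j from rfl]
      rw [div_mul_cancel₀ _ (ne_of_gt (hsp j))]
    have hQ0U : Q0 ∈ U θ := by
      rw [hU θ]
      exact ⟨fun i j => (hQ0pos i j).le, hQ0row, hQ0col⟩
    obtain ⟨hPU, hPmin⟩ := hPhat θ hθΩ
    have hεp := hε_pos θ hθΩ
    have hCK : ∀ i j, C θ i j = -(ε θ) * Real.log (K θ i j) := by
      intro i j
      rw [hlogK θ i j]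
      field_simp
    have hlogQ0 : ∀ i j, Real.log (Q0 i j) = xloc θ i + Real.log (K θ i j)
        + (Real.log (b θ j) - Real.log (sθ j)) := by
      intro i j
      simp only [hQ0def]
      rw [Real.log_mul (mul_ne_zero (Real.exp_ne_zero _) (ne_of_gt (hKpos θ i j)))
          (ne_of_gt (div_pos (hb_pos θ hθΩ j) (hsp j))),
        Real.log_mul (Real.exp_ne_zero _) (ne_of_gt (hKpos θ i j)),
        Real.log_div (ne_of_gt (hb_pos θ hθΩ j)) (ne_of_gt (hsp j)), Real.log_exp]
    have hLsum : ∀ Q' : Fin n → Fin m → ℝ, L θ Q'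
        = ∑ i, ∑ j, (Q' i j * C θ i j + ε θ * (Q' i j * (Real.log (Q' i j) - 1))) := by
      intro Q'
      rw [hL θ Q', mul_neg, sub_neg_eq_add, Finset.mul_sum, ← Finset.sum_add_distrib]
      refine Finset.sum_congr rfl fun i _ => ?_
      rw [Finset.mul_sum, ← Finset.sum_add_distrib]
    have hmaster : ∀ Q' : Fin n → Fin m → ℝ, L θ Q'
        = (∑ i, ∑ j, ε θ * ((Q0 i j - Q' i j) + Q' i j * (Real.log (Q' i j) - Real.log (Q0 i j))))
          + (ε θ * (∑ i, ∑ j, Q' i j * (xloc θ i + (Real.log (b θ j) - Real.log (sθ j))))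
            - ε θ * ∑ i, ∑ j, Q0 i j) := by
      intro Q'
      rw [hLsum Q']
      rw [Finset.mul_sum (s := univ) (f := fun i => ∑ j, Q' i j * (xloc θ i + (Real.log (b θ j) - Real.log (sθ j)))),
        Finset.mul_sum (s := univ) (f := fun i => ∑ j, Q0 i j),
        ← Finset.sum_sub_distrib, ← Finset.sum_add_distrib]
      refine Finset.sum_congr rfl fun i _ => ?_
      rw [Finset.mul_sum, Finset.mul_sum, ← Finset.sum_sub_distrib, ← Finset.sum_add_distrib]
      refine Finset.sum_congr rfl fun j _ => ?_
      rw [hCK i j, hlogQ0 i j]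
      ring
    have hcrossQ : ∀ Q' : Fin n → Fin m → ℝ,
        (∀ i, ∑ j, Q' i j = a θ i) → (∀ j, ∑ i, Q' i j = b θ j) →
        ∑ i, ∑ j, Q' i j * (xloc θ i + (Real.log (b θ j) - Real.log (sθ j)))
          = (∑ i, a θ i * xloc θ i)
            + ∑ j, b θ j * (Real.log (b θ j) - Real.log (sθ j)) := by
      intro Q' hrow hcol
      calc ∑ i, ∑ j, Q' i j * (xloc θ i + (Real.log (b θ j) - Real.log (sθ j)))
          = ∑ i, ∑ j, (Q' i j * xloc θ i
              + Q' i j * (Real.log (b θ j) - Real.log (sθ j))) := by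
            exact Finset.sum_congr rfl fun i _ => Finset.sum_congr rfl fun j _ => by ring
        _ = (∑ i, ∑ j, Q' i j * xloc θ i)
            + ∑ i, ∑ j, Q' i j * (Real.log (b θ j) - Real.log (sθ j)) := by
            rw [← Finset.sum_add_distrib]
            exact Finset.sum_congr rfl fun i _ => by rw [← Finset.sum_add_distrib]
        _ = (∑ i, a θ i * xloc θ i)
            + ∑ j, b θ j * (Real.log (b θ j) - Real.log (sθ j)) := by
            congr 1
            · refine Finset.sum_congr rfl fun i _ => ?_
              rw [← Finset.sum_mul, hrow i]
            · rw [Finset.sum_comm]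
              refine Finset.sum_congr rfl fun j _ => ?_
              rw [← Finset.sum_mul, hcol j]
    have hkeyL : ∀ Q : Fin n → Fin m → ℝ, Q ∈ U θ → L θ Q0 ≤ L θ Q := by
      intro Q hQ
      rw [hU θ] at hQ
      obtain ⟨hQpos, hQrow, hQcol⟩ := hQ
      have hgib : 0 ≤ ∑ i, ∑ j, ε θ
          * ((Q0 i j - Q i j) + Q i j * (Real.log (Q i j) - Real.log (Q0 i j))) := by
        refine Finset.sum_nonneg fun i _ => Finset.sum_nonneg fun j _ => ?_
        have hg := gibbs_term (Q i j) (Q0 i j) (hQpos i j) (hQ0pos i j)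
        have h5 : 0 ≤ (Q0 i j - Q i j)
            + Q i j * (Real.log (Q i j) - Real.log (Q0 i j)) := by linarith
        exact mul_nonneg hεp.le h5
      have hzeroQ0 : (∑ i, ∑ j, ε θ
          * ((Q0 i j - Q0 i j) + Q0 i j * (Real.log (Q0 i j) - Real.log (Q0 i j)))) = 0 := by
        simp
      calc L θ Q0
          = (∑ i, ∑ j, ε θ
              * ((Q0 i j - Q0 i j) + Q0 i j * (Real.log (Q0 i j) - Real.log (Q0 i j))))
            + (ε θ * (∑ i, ∑ j, Q0 i j * (xloc θ i + (Real.log (b θ j) - Real.log (sθ j))))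
              - ε θ * ∑ i, ∑ j, Q0 i j) := hmaster Q0
        _ = (ε θ * (∑ i, ∑ j, Q i j * (xloc θ i + (Real.log (b θ j) - Real.log (sθ j))))
              - ε θ * ∑ i, ∑ j, Q0 i j) := by
            rw [hzeroQ0, zero_add, hcrossQ Q0 hQ0row hQ0col, ← hcrossQ Q hQrow hQcol]
        _ ≤ (∑ i, ∑ j, ε θ
              * ((Q0 i j - Q i j) + Q i j * (Real.log (Q i j) - Real.log (Q0 i j))))
            + (ε θ * (∑ i, ∑ j, Q i j * (xloc θ i + (Real.log (b θ j) - Real.log (sθ j))))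
              - ε θ * ∑ i, ∑ j, Q0 i j) := le_add_of_nonneg_left hgib
        _ = L θ Q := (hmaster Q).symm
    by_contra hne
    have hne' : Q0 ≠ Phat θ := fun e => hne e.symm
    have hlt := hPmin Q0 hQ0U hne'
    have hle := hkeyL (Phat θ) hPU
    linarith
  -- chain rule for the plan map
  have hPcomp : HasFDerivAt (fun θ : Fin p → ℝ => Pj ((xloc θ, θ)))
      (Pder.comp (D.prod (ContinuousLinearMap.id ℝ (Fin p → ℝ)))) θ0 := by
    have h0 : HasFDerivAt
        (Pj ∘ (fun θ : Fin p → ℝ => ((xloc θ, θ) : (Fin n → ℝ) × (Fin p → ℝ))))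
        (Pder.comp (D.prod (ContinuousLinearMap.id ℝ (Fin p → ℝ)))) θ0 := by
      refine HasFDerivAt.comp θ0 ?_ hpair
      show HasFDerivAt Pj Pder ((xloc θ0, θ0))
      rw [hxloc0]
      exact hPder.hasFDerivAt
    exact h0
  have hfderivPhat : fderiv ℝ Phat θ0
      = Pder.comp (D.prod (ContinuousLinearMap.id ℝ (Fin p → ℝ))) := by
    have hEq : Phat =ᶠ[𝓝 θ0] (fun θ => Pj ((xloc θ, θ))) := hPhatloc
    rw [hEq.fderiv_eq]
    exact hPcomp.fderiv
  -- equations for the partial derivatives appearing in the statement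
  have hA_eq : fderiv ℝ (fun z => Fj ((z, θ0))) x0
      = Fder.comp (ContinuousLinearMap.inl ℝ (Fin n → ℝ) (Fin p → ℝ)) := hApart.fderiv
  have hB_eq : fderiv ℝ (fun θ' => Fj ((x0, θ'))) θ0
      = Fder.comp (ContinuousLinearMap.inr ℝ (Fin n → ℝ) (Fin p → ℝ)) := hBpart.fderiv
  have hPx_eq : fderiv ℝ (fun z => Pj ((z, θ0))) x0
      = Pder.comp (ContinuousLinearMap.inl ℝ (Fin n → ℝ) (Fin p → ℝ)) := hPxpart.fderiv
  have hPt_eq : fderiv ℝ (fun θ' => Pj ((x0, θ'))) θ0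
      = Pder.comp (ContinuousLinearMap.inr ℝ (Fin n → ℝ) (Fin p → ℝ)) := hPtpart.fderiv
  -- assembling the three bullets
  have hbullet1 : ∀ y : Fin n → ℝ,
      R (y - fderiv ℝ (fun z => Fj ((z, θ0))) x0 y
        + (∑ i, a θ0 i * y i) • (fun _ => (1:ℝ))) = y := by
    intro y
    rw [hA_eq]
    have h' : y - (Fder.comp (ContinuousLinearMap.inl ℝ (Fin n → ℝ) (Fin p → ℝ))) y
        + (∑ i, a θ0 i * y i) • (fun _ => (1:ℝ)) = T y := by
      rw [hTapp, ContinuousLinearMap.comp_apply, ContinuousLinearMap.inl_apply]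
    rw [h']
    exact hR1 y
  have hbullet2 : ∀ y : Fin n → ℝ,
      R y - fderiv ℝ (fun z => Fj ((z, θ0))) x0 (R y)
        + (∑ i, a θ0 i * R y i) • (fun _ => (1:ℝ)) = y := by
    intro y
    rw [hA_eq]
    have h' : R y - (Fder.comp (ContinuousLinearMap.inl ℝ (Fin n → ℝ) (Fin p → ℝ))) (R y)
        + (∑ i, a θ0 i * R y i) • (fun _ => (1:ℝ)) = T (R y) := by
      rw [hTapp, ContinuousLinearMap.comp_apply, ContinuousLinearMap.inl_apply]
    rw [h']
    exact hR2 y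
  have hbullet3 : ∀ h : Fin p → ℝ,
      fderiv ℝ Phat θ0 h
        = fderiv ℝ (fun z => Pj ((z, θ0))) x0
            (R (fderiv ℝ (fun θ' => Fj ((x0, θ'))) θ0 h))
          + fderiv ℝ (fun θ' => Pj ((x0, θ'))) θ0 h := by
    intro h
    rw [hfderivPhat, hPx_eq, hB_eq, hPt_eq]
    simp only [ContinuousLinearMap.comp_apply, ContinuousLinearMap.inl_apply,
      ContinuousLinearMap.inr_apply, ContinuousLinearMap.prod_apply,
      ContinuousLinearMap.coe_id', id_eq]
    have h1 : Fder (((0 : Fin n → ℝ), h)) = T (D h) := (hTD h).symm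
    rw [h1, hR1]
    rw [← map_add]
    congr 1
    rw [Prod.mk_add_mk, add_zero, zero_add]
  exact ⟨R, hbullet1, hbullet2, hbullet3⟩
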